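/- Let S = K[x_1,...,x_m] be a polynomial ring over a field K, let 1 ≤ j < m, and let X = (x_1,...,x_j) and Y = (x_{j+1},...,x_m) be the ideals generated by the indicated variables. For u ≥ 1, the ideal J = (X² + Y²)^u is minimally generated exactly by the monomials x^a·y^b (where x^a is a monomial in the X-variables of total degree a and y^b a monomial in the Y-variables of total degree b) with a + b = 2u and both a and b even. -/
import Mathlib


open MvPolynomial

/-- The set of monomials `x^a y^b` with `a + b = 2u` and both `a` and `b` even,
where `a` is the total degree in the first `j` variables and `b` the total degree
in the remaining variables. -/
def evenSplitGens (K : Type*) [Field K] (m j u : ℕ) : Set (MvPolynomial (Fin m) K) :=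
  {p | ∃ d : Fin m →₀ ℕ, p = monomial d 1 ∧
    (∑ i : Fin m, if (i : ℕ) < j then d i else 0) + (∑ i : Fin m, if j ≤ (i : ℕ) then d i else 0) = 2 * u ∧
    Even (∑ i : Fin m, if (i : ℕ) < j then d i else 0) ∧
    Even (∑ i : Fin m, if j ≤ (i : ℕ) then d i else 0)}

section Aux

variable {K : Type*} [Field K] {m j : ℕ}

private lemma sum_ite_split (j : ℕ) (d : Fin m →₀ ℕ) :
    (∑ i : Fin m, if (i : ℕ) < j then d i else 0) +
      (∑ i : Fin m, if j ≤ (i : ℕ) then d i else 0) = ∑ i : Fin m, d i := by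
  rw [← Finset.sum_add_distrib]
  refine Finset.sum_congr rfl fun i _ => ?_
  split_ifs <;> omega

private lemma sum_ite_add (p : Fin m → Prop) [DecidablePred p] (d e : Fin m →₀ ℕ) :
    (∑ i : Fin m, if p i then (d + e) i else 0) =
      (∑ i : Fin m, if p i then d i else 0) + (∑ i : Fin m, if p i then e i else 0) := by
  rw [← Finset.sum_add_distrib]
  refine Finset.sum_congr rfl fun i _ => ?_
  simp only [Finsupp.add_apply]
  split_ifs <;> simp

private lemma sum_single_one (i : Fin m) :
    (∑ i' : Fin m, (Finsupp.single i 1 : Fin m →₀ ℕ) i') = 1 := by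
  simp [Finsupp.single_apply]

/-- The `a`-th power of the ideal generated by the variables in `V` is spanned by the
monomials supported in `V` of total degree `a`. -/
private lemma X_pow_span (V : Set (Fin m)) (a : ℕ) :
    Ideal.span ((X : Fin m → MvPolynomial (Fin m) K) '' V) ^ a =
      Ideal.span ((fun d => monomial d (1 : K)) ''
        {d : Fin m →₀ ℕ | (∀ i, i ∉ V → d i = 0) ∧ ∑ i : Fin m, d i = a}) := by
  induction a with
  | zero =>
    rw [pow_zero, Ideal.one_eq_top, eq_comm, Ideal.eq_top_iff_one]
    exact Ideal.subset_span ⟨0, ⟨fun i _ => rfl, by simp⟩, by simp⟩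
  | succ a ih =>
    rw [pow_succ, ih, Ideal.span_mul_span']
    apply le_antisymm
    · rw [Ideal.span_le]
      rintro p hp
      obtain ⟨_, ⟨d, ⟨hd0, hds⟩, rfl⟩, _, ⟨i, hiV, rfl⟩, rfl⟩ := Set.mem_mul.mp hp
      refine Ideal.subset_span ⟨d + Finsupp.single i 1, ⟨fun i' hi' => ?_, ?_⟩, ?_⟩
      · have h1 : d i' = 0 := hd0 i' hi'
        have h2 : i ≠ i' := fun h => hi' (h ▸ hiV)
        simp [Finsupp.add_apply, h1, Finsupp.single_apply, h2]
      · simp only [Finsupp.add_apply, Finset.sum_add_distrib, hds, sum_single_one]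
      · have hX : (X i : MvPolynomial (Fin m) K) = monomial (Finsupp.single i 1) 1 := rfl
        rw [hX, monomial_mul, mul_one]
    · rw [Ideal.span_le]
      rintro p ⟨d, ⟨hd0, hds⟩, rfl⟩
      obtain ⟨i, -, hi⟩ : ∃ i ∈ Finset.univ, d i ≠ 0 :=
        Finset.exists_ne_zero_of_sum_ne_zero (by omega)
      have hiV : i ∈ V := by by_contra h; exact hi (hd0 i h)
      set e : Fin m →₀ ℕ := d - Finsupp.single i 1 with he
      have hei : ∀ i', e i' = d i' - (Finsupp.single i 1 : Fin m →₀ ℕ) i' := fun i' => by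
        simp [he, Finsupp.tsub_apply]
      have hde : d = e + Finsupp.single i 1 := by
        ext i'
        rw [Finsupp.add_apply, hei i']
        rcases eq_or_ne i i' with h | h
        · subst h; simp [Finsupp.single_apply]; omega
        · simp [Finsupp.single_apply, h]
      have hes : ∑ i' : Fin m, e i' = a := by
        have h2 : ∑ i' : Fin m, d i' =
            (∑ i' : Fin m, e i') + ∑ i' : Fin m, (Finsupp.single i 1 : Fin m →₀ ℕ) i' := by
          rw [← Finset.sum_add_distrib]
          exact Finset.sum_congr rfl fun i' _ => by rw [← Finsupp.add_apply, ← hde]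
        rw [hds, sum_single_one] at h2
        omega
      apply Ideal.subset_span
      refine Set.mem_mul.mpr ⟨monomial e 1, ⟨e, ⟨fun i' hi' => ?_, hes⟩, rfl⟩,
        X i, ⟨i, hiV, rfl⟩, ?_⟩
      · rw [hei i']
        simp [hd0 i' hi']
      · have hX : (X i : MvPolynomial (Fin m) K) = monomial (Finsupp.single i 1) 1 := rfl
        rw [hX, monomial_mul, mul_one, ← hde]

private def gensSet (m j u : ℕ) : Set (Fin m →₀ ℕ) :=
  {d | (∑ i : Fin m, if (i : ℕ) < j then d i else 0) +
      (∑ i : Fin m, if j ≤ (i : ℕ) then d i else 0) = 2 * u ∧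
    Even (∑ i : Fin m, if (i : ℕ) < j then d i else 0) ∧
    Even (∑ i : Fin m, if j ≤ (i : ℕ) then d i else 0)}

private lemma evenSplitGens_eq (K : Type*) [Field K] (m j u : ℕ) :
    evenSplitGens K m j u = (fun d => monomial d (1 : K)) '' gensSet m j u := by
  ext p
  constructor
  · rintro ⟨d, rfl, h⟩; exact ⟨d, h, rfl⟩
  · rintro ⟨d, h, rfl⟩; exact ⟨d, rfl, h⟩

private lemma gens_mul_gens (u v : ℕ) :
    Ideal.span (evenSplitGens K m j u) * Ideal.span (evenSplitGens K m j v) ≤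
      Ideal.span (evenSplitGens K m j (u + v)) := by
  rw [Ideal.span_mul_span', Ideal.span_le]
  rintro p hp
  obtain ⟨_, ⟨d, rfl, h1, h2, h3⟩, _, ⟨e, rfl, h4, h5, h6⟩, rfl⟩ := Set.mem_mul.mp hp
  apply Ideal.subset_span
  rw [monomial_mul, mul_one]
  refine ⟨d + e, rfl, ?_, ?_, ?_⟩
  · rw [sum_ite_add, sum_ite_add]; omega
  · rw [sum_ite_add]; exact h2.add h5
  · rw [sum_ite_add]; exact h3.add h6

private lemma spanX_le_gens1 (V : Set (Fin m))
    (hV : (∀ i ∈ V, (i : ℕ) < j) ∨ (∀ i ∈ V, j ≤ (i : ℕ))) :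
    Ideal.span ((X : Fin m → MvPolynomial (Fin m) K) '' V) ^ 2 ≤
      Ideal.span (evenSplitGens K m j 1) := by
  rw [X_pow_span, Ideal.span_le]
  rintro p ⟨d, ⟨hd0, hds⟩, rfl⟩
  have hsplit := sum_ite_split (m := m) j d
  have key : Even (∑ i : Fin m, if (i : ℕ) < j then d i else 0) ∧
      Even (∑ i : Fin m, if j ≤ (i : ℕ) then d i else 0) := by
    rcases hV with hV | hV
    · have hG : (∑ i : Fin m, if j ≤ (i : ℕ) then d i else 0) = 0 :=
        Finset.sum_eq_zero fun i _ => by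
          by_cases h : j ≤ (i : ℕ)
          · have : d i = 0 := hd0 i fun hiV => by have := hV i hiV; omega
            simp [h, this]
          · simp [h]
      refine ⟨⟨1, by omega⟩, ⟨0, by omega⟩⟩
    · have hG : (∑ i : Fin m, if (i : ℕ) < j then d i else 0) = 0 :=
        Finset.sum_eq_zero fun i _ => by
          by_cases h : (i : ℕ) < j
          · have : d i = 0 := hd0 i fun hiV => by have := hV i hiV; omega
            simp [h, this]
          · simp [h]
      refine ⟨⟨0, by omega⟩, ⟨1, by omega⟩⟩
  exact Ideal.subset_span ⟨d, rfl, by omega, key.1, key.2⟩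

private lemma pow_le_gens (u : ℕ) :
    (Ideal.span ((X : Fin m → MvPolynomial (Fin m) K) '' {i | (i : ℕ) < j}) ^ 2 +
      Ideal.span ((X : Fin m → MvPolynomial (Fin m) K) '' {i | j ≤ (i : ℕ)}) ^ 2) ^ u ≤
      Ideal.span (evenSplitGens K m j u) := by
  induction u with
  | zero =>
    rw [pow_zero, Ideal.one_eq_top]
    rw [show Ideal.span (evenSplitGens K m j 0) = ⊤ from
      (Ideal.eq_top_iff_one _).mpr (Ideal.subset_span ⟨0, by simp, by simp, by simp, by simp⟩)]
  | succ u ih =>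
    have h1 : Ideal.span ((X : Fin m → MvPolynomial (Fin m) K) '' {i | (i : ℕ) < j}) ^ 2 ≤
        Ideal.span (evenSplitGens K m j 1) :=
      spanX_le_gens1 _ (Or.inl fun i hi => hi)
    have h2 : Ideal.span ((X : Fin m → MvPolynomial (Fin m) K) '' {i | j ≤ (i : ℕ)}) ^ 2 ≤
        Ideal.span (evenSplitGens K m j 1) :=
      spanX_le_gens1 _ (Or.inr fun i hi => hi)
    calc _ = (Ideal.span ((X : Fin m → MvPolynomial (Fin m) K) '' {i | (i : ℕ) < j}) ^ 2 +
          Ideal.span ((X : Fin m → MvPolynomial (Fin m) K) '' {i | j ≤ (i : ℕ)}) ^ 2) ^ u *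
          (Ideal.span ((X : Fin m → MvPolynomial (Fin m) K) '' {i | (i : ℕ) < j}) ^ 2 +
          Ideal.span ((X : Fin m → MvPolynomial (Fin m) K) '' {i | j ≤ (i : ℕ)}) ^ 2) := pow_succ _ _
      _ ≤ Ideal.span (evenSplitGens K m j u) * (Ideal.span (evenSplitGens K m j 1) +
            Ideal.span (evenSplitGens K m j 1)) :=
          Ideal.mul_mono ih (add_le_add h1 h2)
      _ = Ideal.span (evenSplitGens K m j u) * Ideal.span (evenSplitGens K m j 1) := by
          rw [Submodule.add_eq_sup, sup_idem]
      _ ≤ Ideal.span (evenSplitGens K m j (u + 1)) := gens_mul_gens u 1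

private lemma gens_le_pow (u : ℕ) :
    Ideal.span (evenSplitGens K m j u) ≤
      (Ideal.span ((X : Fin m → MvPolynomial (Fin m) K) '' {i | (i : ℕ) < j}) ^ 2 +
        Ideal.span ((X : Fin m → MvPolynomial (Fin m) K) '' {i | j ≤ (i : ℕ)}) ^ 2) ^ u := by
  classical
  rw [Ideal.span_le]
  rintro p ⟨d, rfl, htot, ⟨k, hk⟩, ⟨l, hl⟩⟩
  have hkl : k + l = u := by omega
  set d1 := Finsupp.filter (fun i : Fin m => (i : ℕ) < j) d with hd1
  set d2 := Finsupp.filter (fun i : Fin m => ¬ (i : ℕ) < j) d with hd2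
  have hsplit : d1 + d2 = d := Finsupp.filter_pos_add_filter_neg d _
  have hm1 : monomial d1 (1 : K) ∈
      Ideal.span ((X : Fin m → MvPolynomial (Fin m) K) '' {i | (i : ℕ) < j}) ^ (k + k) := by
    rw [X_pow_span]
    refine Ideal.subset_span ⟨d1, ⟨fun i hi => ?_, ?_⟩, rfl⟩
    · simp only [Set.mem_setOf_eq] at hi
      simp [hd1, Finsupp.filter_apply, hi]
    · rw [← hk]
      refine Finset.sum_congr rfl fun i _ => ?_
      simp only [hd1, Finsupp.filter_apply]
  have hm2 : monomial d2 (1 : K) ∈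
      Ideal.span ((X : Fin m → MvPolynomial (Fin m) K) '' {i | j ≤ (i : ℕ)}) ^ (l + l) := by
    rw [X_pow_span]
    refine Ideal.subset_span ⟨d2, ⟨fun i hi => ?_, ?_⟩, rfl⟩
    · simp only [Set.mem_setOf_eq] at hi
      have : (i : ℕ) < j := by omega
      simp [hd2, Finsupp.filter_apply, this]
    · rw [← hl]
      refine Finset.sum_congr rfl fun i _ => ?_
      simp only [hd2, Finsupp.filter_apply]
      split_ifs <;> first | rfl | omega
  have hmul := Ideal.mul_mem_mul hm1 hm2
  rw [monomial_mul, one_mul, hsplit] at hmul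
  refine SetLike.le_def.mp ?_ hmul
  have e1 : Ideal.span ((X : Fin m → MvPolynomial (Fin m) K) '' {i | (i : ℕ) < j}) ^ (k + k) =
      (Ideal.span ((X : Fin m → MvPolynomial (Fin m) K) '' {i | (i : ℕ) < j}) ^ 2) ^ k := by
    rw [← pow_mul, two_mul]
  have e2 : Ideal.span ((X : Fin m → MvPolynomial (Fin m) K) '' {i | j ≤ (i : ℕ)}) ^ (l + l) =
      (Ideal.span ((X : Fin m → MvPolynomial (Fin m) K) '' {i | j ≤ (i : ℕ)}) ^ 2) ^ l := by
    rw [← pow_mul, two_mul]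
  rw [e1, e2, ← hkl, pow_add]
  refine Ideal.mul_mono (Ideal.pow_right_mono ?_ k) (Ideal.pow_right_mono ?_ l)
  · rw [Submodule.add_eq_sup]; exact le_sup_left
  · rw [Submodule.add_eq_sup]; exact le_sup_right

end Aux

theorem stmt_0 {K : Type*} [Field K] (m j u : ℕ) (hm : 3 ≤ m) (hj1 : 1 ≤ j) (hjm : j < m)
    (hu : 1 ≤ u) :
    ((Ideal.span ((X : Fin m → MvPolynomial (Fin m) K) '' {i | (i : ℕ) < j}) ^ 2 +
      Ideal.span ((X : Fin m → MvPolynomial (Fin m) K) '' {i | j ≤ (i : ℕ)}) ^ 2) ^ u =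
        Ideal.span (evenSplitGens K m j u)) ∧
    (∀ g ∈ evenSplitGens K m j u, g ∉ Ideal.span (evenSplitGens K m j u \ {g})) := by
  constructor
  · exact le_antisymm (pow_le_gens u) (gens_le_pow u)
  · rintro g ⟨d, rfl, htot, he1, he2⟩ hmem
    have hinj : Function.Injective fun d : Fin m →₀ ℕ => monomial d (1 : K) :=
      monomial_left_injective one_ne_zero
    have himg : evenSplitGens K m j u \ {monomial d (1 : K)} =
        (fun d => monomial d (1 : K)) '' (gensSet m j u \ {d}) := by
      rw [Set.image_diff hinj, Set.image_singleton, evenSplitGens_eq]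
    rw [himg] at hmem
    have hd_supp : (monomial d (1 : K)).support = {d} := by
      classical
      rw [support_monomial, if_neg one_ne_zero]
    obtain ⟨d', ⟨hd'g, hd'ne⟩, hle⟩ :=
      mem_ideal_span_monomial_image.mp hmem d (by rw [hd_supp]; exact Finset.mem_singleton_self d)
    have hd'ne : d' ≠ d := hd'ne
    have hsum' : ∑ i : Fin m, d' i = 2 * u := by
      rw [← sum_ite_split j d']; exact hd'g.1
    have hsum : ∑ i : Fin m, d i = 2 * u := by
      rw [← sum_ite_split j d]; exact htot
    have hlt : ∑ i : Fin m, d' i < ∑ i : Fin m, d i := by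
      obtain ⟨i0, hi0⟩ := Finsupp.ne_iff.mp hd'ne
      refine Finset.sum_lt_sum (fun i _ => hle i) ⟨i0, Finset.mem_univ i0, ?_⟩
      exact lt_of_le_of_ne (hle i0) hi0
    omega
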